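/- The deconcatenation coproduct Δ on A⟨X⟩ is a shuffle-algebra homomorphism: Δ(u ⧢ v) = Δ(u) ⧢ Δ(v) for all words u, v, where the shuffle acts componentwise on tensors. -/

import Mathlib

open Finsupp Finset Filter

/-- A word `w` seen as an element of the free module `A⟨X⟩` (coefficient 1). -/
noncomputable def delta (A : Type*) [CommRing A] {X : Type*} (w : List X) : List X →₀ A :=
  Finsupp.single w 1

/-- Left concatenation by a letter, as a linear map on `A⟨X⟩`. -/
noncomputable def lcons (A : Type*) [CommRing A] {X : Type*} (x : X) :
    (List X →₀ A) →ₗ[A] (List X →₀ A) :=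
  Finsupp.lmapDomain A A (List.cons x)

open TensorProduct in
/-- The deconcatenation coproduct `Δ : A⟨X⟩ → A⟨X⟩ ⊗ A⟨X⟩`, `Δw = Σ_(uv=w) u ⊗ v`. -/
noncomputable def deconcat (A : Type*) [CommRing A] {X : Type*} :
    (List X →₀ A) →ₗ[A] TensorProduct A (List X →₀ A) (List X →₀ A) :=
  Finsupp.linearCombination A (fun w : List X =>
    ∑ i ∈ Finset.range (w.length + 1), delta A (w.take i) ⊗ₜ[A] delta A (w.drop i))


lemma lcons_delta {A : Type*} [CommRing A] {X : Type*} (a : X) (w : List X) :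
    lcons A a (delta A w) = delta A (a :: w) := by
  simp [lcons, delta, Finsupp.mapDomain_single]

open TensorProduct in
lemma deconcat_delta {A : Type*} [CommRing A] {X : Type*} (w : List X) :
    deconcat A (delta A w) = ∑ i ∈ Finset.range (w.length + 1),
      delta A (w.take i) ⊗ₜ[A] delta A (w.drop i) := by
  simp [deconcat, delta, Finsupp.linearCombination_single]

open TensorProduct in
lemma deconcat_lcons {A : Type*} [CommRing A] {X : Type*} (a : X) (f : List X →₀ A) :
    deconcat A (lcons A a f)
      = delta A [] ⊗ₜ[A] lcons A a f
        + TensorProduct.map (lcons A a) LinearMap.id (deconcat A f) := by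
  induction f using Finsupp.induction_linear with
  | zero => simp
  | add f g hf hg => simp only [map_add, hf, hg, tmul_add]; exact add_add_add_comm _ _ _ _
  | single w c =>
      have h1 : lcons A a (Finsupp.single w c) = Finsupp.single (a::w) c := by
        simp [lcons, Finsupp.mapDomain_single]
      rw [h1]
      have h2 : ∀ (v : List X) (c : A), (Finsupp.single v c : List X →₀ A) = c • delta A v := by
        intro v c; simp [delta, Finsupp.smul_single]
      rw [h2 (a::w) c, h2 w c, map_smul, map_smul, deconcat_delta, deconcat_delta]
      simp only [List.length_cons]
      rw [Finset.sum_range_succ' _ (w.length + 1)]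
      simp only [List.take_succ_cons, List.drop_succ_cons, List.take_zero, List.drop_zero,
        map_smul, map_sum, TensorProduct.map_tmul, LinearMap.id_coe, id_eq, lcons_delta,
        Finset.smul_sum, TensorProduct.smul_tmul', tmul_smul]
      rw [smul_add, Finset.smul_sum]
      simp only [TensorProduct.smul_tmul']
      apply add_comm

open TensorProduct in
/-- the deconcatenation coproduct is a shuffle-algebra homomorphism:
`Δ(u ⧢ v) = Δ(u) ⧢ Δ(v)` (shuffle acting componentwise on tensors). -/
theorem stmt9 {A X : Type*} [CommRing A]
    (star : (List X →₀ A) →ₗ[A] (List X →₀ A) →ₗ[A] (List X →₀ A))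
    (hunitl : ∀ w : List X, star (delta A []) (delta A w) = delta A w)
    (hunitr : ∀ w : List X, star (delta A w) (delta A []) = delta A w)
    (hrec : ∀ (a b : X) (u v : List X),
      star (delta A (a :: u)) (delta A (b :: v)) =
        lcons A a (star (delta A u) (delta A (b :: v)))
          + lcons A b (star (delta A (a :: u)) (delta A v))) :
    ∀ w₁ w₂ : List X,
      deconcat A (star (delta A w₁) (delta A w₂))
        = ∑ i ∈ Finset.range (w₁.length + 1), ∑ j ∈ Finset.range (w₂.length + 1),
            star (delta A (w₁.take i)) (delta A (w₂.take j))
              ⊗ₜ[A] star (delta A (w₁.drop i)) (delta A (w₂.drop j)) := by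
  intro w₁ w₂
  induction w₁ generalizing w₂ with
  | nil =>
      rw [hunitl, deconcat_delta]
      simp only [List.length_nil, zero_add, Finset.range_one, Finset.sum_singleton,
        List.take_nil, List.drop_nil, hunitl]
  | cons a u ih =>
      induction w₂ with
      | nil =>
          rw [hunitr, deconcat_delta]
          simp only [List.length_nil, zero_add, Finset.range_one, Finset.sum_singleton,
            List.take_nil, List.drop_nil, hunitr]
      | cons b v ih2 =>
          rw [hrec, map_add, deconcat_lcons, deconcat_lcons, ih (b::v), ih2]
          simp only [map_sum, TensorProduct.map_tmul, LinearMap.id_coe, id_eq, List.length_cons]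
          simp only [Finset.sum_range_succ']
          simp only [List.take_succ_cons, List.drop_succ_cons, List.take_zero, List.drop_zero]
          simp only [hunitl, hunitr, hrec]
          simp only [lcons_delta, add_tmul, tmul_add, Finset.sum_add_distrib]
          ac_rfl
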